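/- The operator S := (1/d)α_d + (1+1/d)σ_d on ℂ^d⊗ℂ^d satisfies: (i) S ∈ cone(S) (since S = (1/d)(α_d+σ_d) + σ_d and both σ_d and (α_d+σ_d)/2 are separable); (ii) S^Γ + α_d^Γ = (2/(d(d−1)))(𝟙−Φ) ≥ 0 and S^Γ − α_d^Γ = (2/d)Φ ≥ 0, where Φ is the maximally entangled state; (iii) Tr S = 1 + 2/d. Consequently Ẽ_κ(α_d) ≤ log₂(1 + 2/d). -/

import Mathlib

open Matrix BigOperators
open scoped Kronecker ComplexOrder

noncomputable section

abbrev BOp (d : ℕ) := Matrix (Fin d × Fin d) (Fin d × Fin d) ℂ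

/-- Loewner order: `A ≤ B` iff `B - A` is positive semidefinite. -/
def loe {n : Type*} [Fintype n] (A B : Matrix n n ℂ) : Prop := (B - A).PosSemidef

/-- A density operator: positive semidefinite with unit trace. -/
def IsState {n : Type*} [Fintype n] [DecidableEq n] (ρ : Matrix n n ℂ) : Prop :=
  ρ.PosSemidef ∧ ρ.trace = 1

/-- Separable bipartite state (convex combination of product states). -/
def IsSep {a b : Type*} [Fintype a] [DecidableEq a] [Fintype b] [DecidableEq b]
    (ρ : Matrix (a × b) (a × b) ℂ) : Prop :=
  ∃ (m : ℕ) (p : Fin m → ℝ) (A : Fin m → Matrix a a ℂ) (B : Fin m → Matrix b b ℂ),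
    (∀ i, 0 ≤ p i) ∧ (∑ i, p i) = 1 ∧
    (∀ i, IsState (A i)) ∧ (∀ i, IsState (B i)) ∧
    ρ = ∑ i, ((p i : ℝ) : ℂ) • (A i ⊗ₖ B i)

/-- The cone generated by separable states. -/
def InSepCone {a b : Type*} [Fintype a] [DecidableEq a] [Fintype b] [DecidableEq b]
    (S : Matrix (a × b) (a × b) ℂ) : Prop :=
  ∃ (c : ℝ) (σ : Matrix (a × b) (a × b) ℂ), 0 ≤ c ∧ IsSep σ ∧ S = ((c : ℝ) : ℂ) • σ

/-- Maximally entangled state `Φ_d` on `ℂ^d ⊗ ℂ^d`. -/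
def PhiME (d : ℕ) : BOp d := fun p q => if p.1 = p.2 ∧ q.1 = q.2 then ((1 : ℂ) / d) else 0

/-- `τ_d = (𝟙 - Φ_d)/(d² - 1)`. -/
def tauME (d : ℕ) : BOp d := (((d : ℂ)^2 - 1))⁻¹ • (1 - PhiME d)

/-- Partial transpose on the second tensor factor. -/
def pt {a b : Type*} (A : Matrix (a × b) (a × b) ℂ) : Matrix (a × b) (a × b) ℂ :=
  fun p q => A (p.1, q.2) (q.1, p.2)

/-- Total positive-semidefinite square root (junk value `0` off the PSD cone). -/
noncomputable def msqrt {n : Type*} [Fintype n] [DecidableEq n] (A : Matrix n n ℂ) :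
    Matrix n n ℂ :=
  open scoped Classical in
  if h : A.PosSemidef then h.1.eigenvectorUnitary.1 * diagonal ((↑) ∘ (h.1.eigenvalues · |>.sqrt)) *
      (star h.1.eigenvectorUnitary : Matrix n n ℂ) else 0

/-- Trace norm `‖A‖₁ = Tr √(AᴴA)`. -/
noncomputable def traceNorm {n : Type*} [Fintype n] [DecidableEq n] (A : Matrix n n ℂ) : ℝ :=
  (msqrt (Aᴴ * A)).trace.re


/-- The swap operator `F` on `ℂ^d ⊗ ℂ^d`. -/
def swapOp (d : ℕ) : BOp d := fun p q => if p.1 = q.2 ∧ p.2 = q.1 then 1 else 0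

/-- Antisymmetric Werner state `α_d = (𝟙 - F)/(d(d-1))`. -/
noncomputable def alphaW (d : ℕ) : BOp d :=
  (((d : ℂ) * ((d : ℂ) - 1))⁻¹) • (1 - swapOp d)

/-- Symmetric Werner state `σ_d = (𝟙 + F)/(d(d+1))`. -/
noncomputable def sigW (d : ℕ) : BOp d :=
  (((d : ℂ) * ((d : ℂ) + 1))⁻¹) • (1 + swapOp d)

/-- Modified κ-entanglement, with the constraints written on the partial transposes. -/
noncomputable def EkappaG (d : ℕ) (ρ : BOp d) : ℝ :=
  Real.logb 2 (sInf {t : ℝ | ∃ S : BOp d,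
    InSepCone S ∧ loe (-(pt S)) (pt ρ) ∧ loe (pt ρ) (pt S) ∧ t = S.trace.re})


/-- outer product v vᴴ is PSD -/
lemma psd_outer {n : Type*} [Fintype n] (v : n → ℂ) :
    (Matrix.vecMulVec v (star v)).PosSemidef := by
  refine Matrix.PosSemidef.of_dotProduct_mulVec_nonneg ?_ ?_
  · ext i j
    simp [Matrix.vecMulVec, Matrix.conjTranspose_apply, mul_comm]
  · intro x
    have : (star x) ⬝ᵥ ((Matrix.vecMulVec v (star v)) *ᵥ x)
        = (∑ i, star (x i) * v i) * (∑ j, star (v j) * x j) := by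
      simp [dotProduct, Matrix.mulVec, Matrix.vecMulVec, Finset.mul_sum,
        Finset.sum_mul, mul_comm, mul_left_comm, mul_assoc]
      rw [Finset.sum_comm]
    rw [this]
    have h2 : (∑ j, star (v j) * x j) = star (∑ i, star (x i) * v i) := by
      simp [star_sum, mul_comm]
    rw [h2, mul_comm]
    exact star_mul_self_nonneg _
    
lemma psd_smul {n : Type*} [Fintype n] {M : Matrix n n ℂ} (hM : M.PosSemidef)
    {c : ℂ} (hc : 0 ≤ c) : (c • M).PosSemidef := by
  refine Matrix.PosSemidef.of_dotProduct_mulVec_nonneg ?_ ?_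
  · have hcs : star c = c := by
      rw [Complex.star_def, Complex.conj_eq_iff_im]
      exact (Complex.le_def.mp hc).2.symm
    ext i j
    simp only [Matrix.conjTranspose_apply, Matrix.smul_apply, star_mul', hcs, smul_eq_mul]
    rw [← Matrix.conjTranspose_apply, hM.1.eq]
  · intro x
    rw [Matrix.smul_mulVec, dotProduct_smul, smul_eq_mul]
    exact mul_nonneg hc (hM.dotProduct_mulVec_nonneg x)

lemma phi_eq_outer (d : ℕ) (hd : 0 < d) :
    PhiME d = Matrix.vecMulVec (fun p : Fin d × Fin d => if p.1 = p.2 then ((Real.sqrt d : ℂ))⁻¹ else 0)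
      (star fun p : Fin d × Fin d => if p.1 = p.2 then ((Real.sqrt d : ℂ))⁻¹ else 0) := by
  have hs : ((Real.sqrt d : ℂ))⁻¹ * ((Real.sqrt d : ℂ))⁻¹ = 1 / d := by
    rw [← mul_inv, one_div]
    congr 1
    norm_cast
    rw [Real.mul_self_sqrt (by positivity)]
  ext p q
  by_cases h1 : p.1 = p.2 <;> by_cases h2 : q.1 = q.2 <;>
    simp [PhiME, Matrix.vecMulVec, h1, h2, Pi.star_apply, hs]

lemma phi_psd (d : ℕ) (hd : 0 < d) : (PhiME d).PosSemidef := by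
  rw [phi_eq_outer d hd]; exact psd_outer _

lemma phi_idem (d : ℕ) (hd : 0 < d) : PhiME d * PhiME d = PhiME d := by
  ext p q
  simp only [Matrix.mul_apply, PhiME]
  have key : ∀ r : Fin d × Fin d,
      (if p.1 = p.2 ∧ r.1 = r.2 then (1:ℂ)/d else 0) * (if r.1 = r.2 ∧ q.1 = q.2 then (1:ℂ)/d else 0)
        = if r.1 = r.2 then (if p.1 = p.2 ∧ q.1 = q.2 then (1:ℂ)/d * (1/d) else 0) else 0 := by
    intro r
    by_cases h1 : p.1 = p.2 <;> by_cases h2 : r.1 = r.2 <;> by_cases h3 : q.1 = q.2 <;>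
      simp [h1, h2, h3]
  simp only [key]
  rw [Fintype.sum_prod_type]
  simp only [Finset.sum_ite_eq, Finset.mem_univ, if_true]
  have hd' : (d : ℂ) ≠ 0 := by exact_mod_cast hd.ne'
  by_cases h : p.1 = p.2 ∧ q.1 = q.2 <;> simp [h, Finset.sum_const]
  field_simp

lemma one_sub_phi_psd (d : ℕ) (hd : 0 < d) : ((1 : BOp d) - PhiME d).PosSemidef := by
  have herm : (PhiME d)ᴴ = PhiME d := (phi_psd d hd).1
  have key : ((1 : BOp d) - PhiME d)ᴴ * ((1 : BOp d) - PhiME d) = (1 : BOp d) - PhiME d := by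
    rw [Matrix.conjTranspose_sub, Matrix.conjTranspose_one, herm]
    simp only [Matrix.sub_mul, Matrix.mul_sub, Matrix.one_mul, Matrix.mul_one, phi_idem d hd]
    abel
  rw [← key]
  exact Matrix.posSemidef_conjTranspose_mul_self _

lemma cast_facts (d : ℕ) (hd : 1 < d) :
    ((d:ℂ) ≠ 0) ∧ ((d:ℂ) - 1 ≠ 0) ∧ ((d:ℂ) + 1 ≠ 0) ∧ ((d:ℂ) + 2 ≠ 0) := by
  have h0 : (d:ℂ) ≠ 0 := Nat.cast_ne_zero.mpr (by omega)
  refine ⟨h0, sub_ne_zero.mpr ?_, ?_, ?_⟩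
  · exact_mod_cast (by omega : d ≠ 1)
  · have : ((d+1 : ℕ):ℂ) ≠ 0 := Nat.cast_ne_zero.mpr (by omega)
    push_cast at this; exact this
  · have : ((d+2 : ℕ):ℂ) ≠ 0 := Nat.cast_ne_zero.mpr (by omega)
    push_cast at this; exact this


lemma pt_sum_id (d : ℕ) (hd : 1 < d) :
    pt (((d : ℂ))⁻¹ • alphaW d + (1 + ((d : ℂ))⁻¹) • sigW d) + pt (alphaW d) =
      (2 / ((d : ℂ) * ((d : ℂ) - 1))) • ((1 : BOp d) - PhiME d) := by
  obtain ⟨h0, h1, h2, h3⟩ := cast_facts d hd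
  ext p q
  obtain ⟨p1, p2⟩ := p; obtain ⟨q1, q2⟩ := q
  simp only [pt, alphaW, sigW, swapOp, PhiME, Matrix.add_apply, Matrix.smul_apply,
    Matrix.sub_apply, Matrix.one_apply, smul_eq_mul, Prod.mk.injEq]
  have e1 : (p1 = q1 ∧ q2 = p2) = (p1 = q1 ∧ p2 = q2) := by
    apply propext; constructor <;> rintro ⟨a, b⟩ <;> exact ⟨a, b.symm⟩
  have e2 : (p1 = p2 ∧ q2 = q1) = (p1 = p2 ∧ q1 = q2) := by
    apply propext; constructor <;> rintro ⟨a, b⟩ <;> exact ⟨a, b.symm⟩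
  simp only [e1, e2]
  split_ifs <;> field_simp <;> ring

lemma pt_diff_id (d : ℕ) (hd : 1 < d) :
    pt (((d : ℂ))⁻¹ • alphaW d + (1 + ((d : ℂ))⁻¹) • sigW d) - pt (alphaW d) =
      (2 / (d : ℂ)) • PhiME d := by
  obtain ⟨h0, h1, h2, h3⟩ := cast_facts d hd
  ext p q
  obtain ⟨p1, p2⟩ := p; obtain ⟨q1, q2⟩ := q
  simp only [pt, alphaW, sigW, swapOp, PhiME, Matrix.add_apply, Matrix.smul_apply,
    Matrix.sub_apply, Matrix.one_apply, smul_eq_mul, Prod.mk.injEq]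
  have e1 : (p1 = q1 ∧ q2 = p2) = (p1 = q1 ∧ p2 = q2) := by
    apply propext; constructor <;> rintro ⟨a, b⟩ <;> exact ⟨a, b.symm⟩
  have e2 : (p1 = p2 ∧ q2 = q1) = (p1 = p2 ∧ q1 = q2) := by
    apply propext; constructor <;> rintro ⟨a, b⟩ <;> exact ⟨a, b.symm⟩
  simp only [e1, e2]
  split_ifs <;> field_simp <;> ring

lemma trace_swap (d : ℕ) : (swapOp d).trace = (d : ℂ) := by
  simp only [Matrix.trace, Matrix.diag, swapOp]
  rw [Fintype.sum_prod_type]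
  have : ∀ a : Fin d, (∑ b : Fin d, if (a = b ∧ b = a) then (1:ℂ) else 0) = 1 := by
    intro a
    rw [Finset.sum_congr rfl (g := fun b => if a = b then (1:ℂ) else 0)
      (fun b _ => by by_cases h : a = b <;> simp [h, h])]
    simp
  simp only [this, Finset.sum_const, Finset.card_univ, Fintype.card_fin, nsmul_eq_mul, mul_one]

lemma trace_S (d : ℕ) (hd : 1 < d) :
    (((d : ℂ))⁻¹ • alphaW d + (1 + ((d : ℂ))⁻¹) • sigW d).trace = 1 + 2 / (d : ℂ) := by
  obtain ⟨h0, h1, h2, h3⟩ := cast_facts d hd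
  have t1 : (1 : BOp d).trace = ((d : ℂ))^2 := by
    rw [Matrix.trace_one]
    simp [Fintype.card_prod]
    ring
  simp only [alphaW, sigW, Matrix.trace_add, Matrix.trace_smul, Matrix.trace_sub, t1,
    trace_swap, smul_eq_mul]
  field_simp
  ring

lemma fin4_sum (a b : ℕ) (ha : a ≤ 2) (hb : b ≤ 2) :
    ∑ t : Fin 4, (Complex.I ^ ((t : ℕ) * a) * (-Complex.I) ^ ((t : ℕ) * b)) =
      if a = b then 4 else 0 := by
  interval_cases a <;> interval_cases b <;>
    simp only [Fin.sum_univ_four, show ((0:Fin 4):ℕ) = 0 from rfl,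
      show ((1:Fin 4):ℕ) = 1 from rfl, show ((2:Fin 4):ℕ) = 2 from rfl,
      show ((3:Fin 4):ℕ) = 3 from rfl] <;>
    norm_num [pow_succ, Complex.I_mul_I] <;> ring

lemma indic_iff {d : ℕ} (k l m n : Fin d)
    (h : ∀ j : Fin d, ((if j = k then 1 else 0) + (if j = l then 1 else 0) : ℕ)
      = (if j = m then 1 else 0) + (if j = n then 1 else 0)) :
    (k = m ∧ l = n) ∨ (k = n ∧ l = m) := by
  have hk := h k
  have hl := h l
  simp only [if_pos rfl] at hk hl
  by_cases h1 : k = m <;> by_cases h2 : l = n <;> by_cases h3 : k = n <;>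
    by_cases h4 : l = m <;> by_cases h5 : k = l <;>
    simp_all <;> omega

lemma charSum (d : ℕ) (k l m n : Fin d) :
    ∑ χ : Fin d → Fin 4, (Complex.I ^ ((χ k : ℕ)) * Complex.I ^ ((χ l : ℕ)) *
        (-Complex.I) ^ ((χ m : ℕ)) * (-Complex.I) ^ ((χ n : ℕ)))
      = if (k = m ∧ l = n) ∨ (k = n ∧ l = m) then ((4 : ℂ)) ^ d else 0 := by
  classical
  set a : Fin d → ℕ := fun j => (if j = k then 1 else 0) + (if j = l then 1 else 0) with ha
  set b : Fin d → ℕ := fun j => (if j = m then 1 else 0) + (if j = n then 1 else 0) with hb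
  have step1 : ∀ χ : Fin d → Fin 4,
      Complex.I ^ ((χ k : ℕ)) * Complex.I ^ ((χ l : ℕ)) *
        (-Complex.I) ^ ((χ m : ℕ)) * (-Complex.I) ^ ((χ n : ℕ))
      = ∏ j, (Complex.I ^ ((χ j : ℕ) * a j) * (-Complex.I) ^ ((χ j : ℕ) * b j)) := by
    intro χ
    rw [Finset.prod_mul_distrib, Finset.prod_pow_eq_pow_sum, Finset.prod_pow_eq_pow_sum]
    have sa : ∑ j, (χ j : ℕ) * a j = (χ k : ℕ) + (χ l : ℕ) := by
      simp only [ha, mul_add, Finset.sum_add_distrib, mul_ite, mul_one, mul_zero,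
        Finset.sum_ite_eq', Finset.mem_univ, if_true]
    have sb : ∑ j, (χ j : ℕ) * b j = (χ m : ℕ) + (χ n : ℕ) := by
      simp only [hb, mul_add, Finset.sum_add_distrib, mul_ite, mul_one, mul_zero,
        Finset.sum_ite_eq', Finset.mem_univ, if_true]
    rw [sa, sb, pow_add, pow_add]
    ring
  rw [Finset.sum_congr rfl (fun χ _ => step1 χ),
    ← Fintype.prod_sum (κ := fun _ : Fin d => Fin 4)
      (fun j t => Complex.I ^ ((t : ℕ) * a j) * (-Complex.I) ^ ((t : ℕ) * b j))]
  have step3 : ∀ j, (∑ t : Fin 4, (Complex.I ^ ((t : ℕ) * a j) * (-Complex.I) ^ ((t : ℕ) * b j)))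
      = if a j = b j then 4 else 0 := by
    intro j
    exact fin4_sum (a j) (b j) (by simp only [ha]; split_ifs <;> omega)
      (by simp only [hb]; split_ifs <;> omega)
  rw [Finset.prod_congr rfl (fun j _ => step3 j)]
  by_cases hall : ∀ j, a j = b j
  · rw [if_pos, Finset.prod_congr rfl (fun j _ => if_pos (hall j)), Finset.prod_const]
    · simp
    · exact indic_iff k l m n hall
  · rw [if_neg]
    · push_neg at hall
      obtain ⟨j0, hj0⟩ := hall
      exact Finset.prod_eq_zero (Finset.mem_univ j0) (if_neg hj0)
    · rintro (⟨rfl, rfl⟩ | ⟨rfl, rfl⟩) <;> exact hall (fun j => by simp [ha, hb, add_comm])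

def eVec (d : ℕ) (a : Fin d) : Fin d → ℂ := fun j => if j = a then 1 else 0

def eProj (d : ℕ) (a : Fin d) : Matrix (Fin d) (Fin d) ℂ :=
  Matrix.vecMulVec (eVec d a) (star (eVec d a))

def chiVec (d : ℕ) (χ : Fin d → Fin 4) : Fin d → ℂ :=
  fun j => Complex.I ^ ((χ j : ℕ)) * ((Real.sqrt d : ℂ))⁻¹

def chiProj (d : ℕ) (χ : Fin d → Fin 4) : Matrix (Fin d) (Fin d) ℂ :=
  Matrix.vecMulVec (chiVec d χ) (star (chiVec d χ))

lemma eProj_apply (d : ℕ) (a k m : Fin d) :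
    eProj d a k m = (if k = a then 1 else 0) * (if m = a then 1 else 0) := by
  simp [eProj, eVec, Matrix.vecMulVec_apply, Pi.star_apply, apply_ite (starRingEnd ℂ)]

lemma sqrt_inv_sq (d : ℕ) : ((Real.sqrt d : ℂ))⁻¹ * ((Real.sqrt d : ℂ))⁻¹ = ((d : ℂ))⁻¹ := by
  rw [← mul_inv]
  congr 1
  norm_cast
  rw [Real.mul_self_sqrt (by positivity)]

lemma chiProj_apply (d : ℕ) (χ : Fin d → Fin 4) (k m : Fin d) :
    chiProj d χ k m = Complex.I ^ ((χ k : ℕ)) * (-Complex.I) ^ ((χ m : ℕ)) * ((d : ℂ))⁻¹ := by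
  simp only [chiProj, chiVec, Matrix.vecMulVec_apply, Pi.star_apply, star_mul', star_pow,
    Complex.star_def, Complex.conj_I]
  have hc : (starRingEnd ℂ) ((Real.sqrt d : ℂ))⁻¹ = ((Real.sqrt d : ℂ))⁻¹ := by
    rw [← Complex.ofReal_inv, Complex.conj_ofReal, Complex.ofReal_inv]
  rw [hc, show ∀ x y z w : ℂ, x * y * (z * w) = x * z * (y * w) from fun x y z w => by ring,
    sqrt_inv_sq]

lemma eProj_state (d : ℕ) (a : Fin d) : IsState (eProj d a) := by
  refine ⟨psd_outer _, ?_⟩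
  simp only [Matrix.trace, Matrix.diag, eProj_apply]
  rw [Finset.sum_congr rfl (fun j _ => by by_cases h : j = a <;> simp [h] :
    ∀ j ∈ Finset.univ, ((if j = a then (1:ℂ) else 0) * (if j = a then 1 else 0))
      = if j = a then 1 else 0)]
  simp

lemma chiProj_state (d : ℕ) (hd : 0 < d) (χ : Fin d → Fin 4) : IsState (chiProj d χ) := by
  refine ⟨psd_outer _, ?_⟩
  simp only [Matrix.trace, Matrix.diag, chiProj_apply]
  have : ∀ j : Fin d, Complex.I ^ ((χ j : ℕ)) * (-Complex.I) ^ ((χ j : ℕ)) * ((d : ℂ))⁻¹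
      = ((d : ℂ))⁻¹ := by
    intro j
    rw [← mul_pow]
    simp [Complex.I_mul_I]
  simp only [this, Finset.sum_const, Finset.card_univ, Fintype.card_fin, nsmul_eq_mul]
  have hd' : (d : ℂ) ≠ 0 := Nat.cast_ne_zero.mpr hd.ne'
  field_simp

lemma collapse {d : ℕ} (k l m n : Fin d) (c : Fin d → Fin d → ℂ) :
    (∑ a : Fin d, ∑ b : Fin d, c a b * ((if k = a then 1 else 0) * (if m = a then 1 else 0)) *
      ((if l = b then 1 else 0) * (if n = b then 1 else 0)))
    = if k = m ∧ l = n then c k l else 0 := by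
  by_cases h1 : k = m <;> by_cases h2 : l = n
  · subst h1; subst h2
    simp [ite_mul, mul_ite, Finset.sum_ite_eq]
  · subst h1
    simp [ite_mul, mul_ite, Finset.sum_ite_eq, h2]
  · subst h2
    simp [ite_mul, mul_ite, Finset.sum_ite_eq, h1]
  · simp [ite_mul, mul_ite, Finset.sum_ite_eq, h1, h2]

abbrev idxT (d : ℕ) := (Fin d × Fin d) ⊕ (Fin d → Fin 4)

noncomputable def wt (d : ℕ) : idxT d → ℝ
  | .inl (a, b) => 2 / ((d:ℝ) * ((d:ℝ)-1) * ((d:ℝ)+2))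
      + (if a = b then ((d:ℝ)-2) / ((d:ℝ) * ((d:ℝ)-1) * ((d:ℝ)+2)) else 0)
  | .inr _ => (((d:ℝ)-2) * (d:ℝ)) / (((d:ℝ)-1) * ((d:ℝ)+2) * 4^d)

noncomputable def mA (d : ℕ) : idxT d → Matrix (Fin d) (Fin d) ℂ
  | .inl (a, _) => eProj d a
  | .inr χ => chiProj d χ

noncomputable def mB (d : ℕ) : idxT d → Matrix (Fin d) (Fin d) ℂ
  | .inl (_, b) => eProj d b
  | .inr χ => chiProj d χ

lemma wt_nonneg (d : ℕ) (hd : 1 < d) : ∀ x, 0 ≤ wt d x := by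
  have h2 : (2:ℝ) ≤ (d:ℝ) := by exact_mod_cast hd
  have hd0 : (0:ℝ) < d := by linarith
  have h1 : (0:ℝ) < (d:ℝ) - 1 := by linarith
  have h3 : (0:ℝ) < (d:ℝ) + 2 := by linarith
  have hden : (0:ℝ) < (d:ℝ) * ((d:ℝ)-1) * ((d:ℝ)+2) := mul_pos (mul_pos hd0 h1) h3
  have h4 : (0:ℝ) < (4:ℝ)^d := by positivity
  rintro (⟨a, b⟩ | χ) <;> simp only [wt]
  · have A : (0:ℝ) ≤ 2 / ((d:ℝ) * ((d:ℝ)-1) * ((d:ℝ)+2)) := div_nonneg (by norm_num) hden.le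
    have B : (0:ℝ) ≤ ((d:ℝ)-2) / ((d:ℝ) * ((d:ℝ)-1) * ((d:ℝ)+2)) :=
      div_nonneg (by linarith) hden.le
    split_ifs <;> linarith
  · exact div_nonneg (mul_nonneg (by linarith) hd0.le)
      (mul_pos (mul_pos h1 h3) h4).le

lemma wt_sum (d : ℕ) (hd : 1 < d) : ∑ x, wt d x = 1 := by
  have h2 : (2:ℝ) ≤ (d:ℝ) := by exact_mod_cast hd
  have hd0 : ((d:ℝ)) ≠ 0 := by linarith
  have h1 : ((d:ℝ) - 1) ≠ 0 := by linarith
  have h3 : ((d:ℝ) + 2) ≠ 0 := by linarith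
  have h4 : ((4:ℝ)^d) ≠ 0 := by positivity
  rw [Fintype.sum_sum_type]
  have hl : ∑ y : Fin d × Fin d, wt d (Sum.inl y)
      = (d:ℝ)^2 * (2 / ((d:ℝ) * ((d:ℝ)-1) * ((d:ℝ)+2)))
        + (d:ℝ) * (((d:ℝ)-2) / ((d:ℝ) * ((d:ℝ)-1) * ((d:ℝ)+2))) := by
    rw [Fintype.sum_prod_type]
    simp only [wt, Finset.sum_add_distrib, Finset.sum_const, Finset.sum_ite_eq,
      Finset.mem_univ, if_true, Finset.card_univ, Fintype.card_fin, nsmul_eq_mul]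
    push_cast
    ring
  have hr : ∑ χ : Fin d → Fin 4, wt d (Sum.inr χ)
      = (4:ℝ)^d * ((((d:ℝ)-2) * (d:ℝ)) / (((d:ℝ)-1) * ((d:ℝ)+2) * 4^d)) := by
    simp only [wt, Finset.sum_const, Finset.card_univ, Fintype.card_fun, Fintype.card_fin,
      nsmul_eq_mul]
    push_cast
    ring
  rw [hl, hr]
  field_simp
  ring

lemma sep_main (d : ℕ) (hd : 1 < d) :
    ((d : ℂ))⁻¹ • alphaW d + (1 + ((d : ℂ))⁻¹) • sigW d
      = ((((d:ℝ)+2)/(d:ℝ) : ℝ) : ℂ) • ∑ x : idxT d, ((wt d x : ℝ) : ℂ) • (mA d x ⊗ₖ mB d x) := by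
  obtain ⟨h0, h1, h2, h3⟩ := cast_facts d hd
  have h4 : ((4:ℂ))^d ≠ 0 := by positivity
  ext ⟨k, l⟩ ⟨m, n⟩
  have hface : (∑ x : idxT d, ((wt d x : ℝ) : ℂ) • (mA d x ⊗ₖ mB d x)) (k,l) (m,n)
      = (if k = m ∧ l = n then
          ((2 / ((d:ℂ) * ((d:ℂ)-1) * ((d:ℂ)+2)))
            + (if k = l then ((d:ℂ)-2) / ((d:ℂ) * ((d:ℂ)-1) * ((d:ℂ)+2)) else 0)) else 0)
        + ((((d:ℂ)-2) * (d:ℂ)) / (((d:ℂ)-1) * ((d:ℂ)+2) * 4^d)) * ((d:ℂ))⁻¹ * ((d:ℂ))⁻¹ *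
            (if (k = m ∧ l = n) ∨ (k = n ∧ l = m) then ((4:ℂ))^d else 0) := by
    rw [Matrix.sum_apply, Fintype.sum_sum_type]
    have hinl : ∑ y : Fin d × Fin d, (((wt d (Sum.inl y) : ℝ) : ℂ) • (mA d (Sum.inl y) ⊗ₖ mB d (Sum.inl y))) (k,l) (m,n)
        = if k = m ∧ l = n then
            ((2 / ((d:ℂ) * ((d:ℂ)-1) * ((d:ℂ)+2)))
              + (if k = l then ((d:ℂ)-2) / ((d:ℂ) * ((d:ℂ)-1) * ((d:ℂ)+2)) else 0)) else 0 := by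
      rw [Fintype.sum_prod_type]
      have step : ∀ a b : Fin d,
          (((wt d (Sum.inl (a,b)) : ℝ) : ℂ) • (mA d (Sum.inl (a,b)) ⊗ₖ mB d (Sum.inl (a,b)))) (k,l) (m,n)
          = (((wt d (Sum.inl (a,b)) : ℝ) : ℂ)) * ((if k = a then 1 else 0) * (if m = a then 1 else 0)) *
              ((if l = b then 1 else 0) * (if n = b then 1 else 0)) := by
        intro a b
        simp only [mA, mB, Matrix.smul_apply, Matrix.kroneckerMap_apply, eProj_apply,
          smul_eq_mul]
        ring
      simp only [step]
      rw [collapse k l m n (fun a b => ((wt d (Sum.inl (a,b)) : ℝ) : ℂ))]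
      by_cases hc : k = m ∧ l = n
      · rw [if_pos hc, if_pos hc]
        simp only [wt]
        by_cases hkl : k = l <;> simp [hkl] <;> push_cast <;> ring
      · rw [if_neg hc, if_neg hc]
    have hinr : ∑ χ : Fin d → Fin 4, (((wt d (Sum.inr χ) : ℝ) : ℂ) • (mA d (Sum.inr χ) ⊗ₖ mB d (Sum.inr χ))) (k,l) (m,n)
        = ((((d:ℂ)-2) * (d:ℂ)) / (((d:ℂ)-1) * ((d:ℂ)+2) * 4^d)) * ((d:ℂ))⁻¹ * ((d:ℂ))⁻¹ *
            (if (k = m ∧ l = n) ∨ (k = n ∧ l = m) then ((4:ℂ))^d else 0) := by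
      have step : ∀ χ : Fin d → Fin 4,
          (((wt d (Sum.inr χ) : ℝ) : ℂ) • (mA d (Sum.inr χ) ⊗ₖ mB d (Sum.inr χ))) (k,l) (m,n)
          = (Complex.I ^ ((χ k : ℕ)) * Complex.I ^ ((χ l : ℕ)) *
              (-Complex.I) ^ ((χ m : ℕ)) * (-Complex.I) ^ ((χ n : ℕ))) *
            (((((d:ℂ)-2) * (d:ℂ)) / (((d:ℂ)-1) * ((d:ℂ)+2) * 4^d)) * ((d:ℂ))⁻¹ * ((d:ℂ))⁻¹) := by
        intro χ
        simp only [mA, mB, Matrix.smul_apply, Matrix.kroneckerMap_apply, chiProj_apply,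
          smul_eq_mul, wt]
        push_cast
        ring
      simp only [step]
      rw [← Finset.sum_mul, charSum d k l m n]
      ring
    rw [hinl, hinr]
  simp only [Matrix.add_apply, Matrix.smul_apply, hface, alphaW, sigW, swapOp,
    Matrix.sub_apply, Matrix.one_apply, Prod.mk.injEq, smul_eq_mul]
  push_cast
  by_cases hA : k = m ∧ l = n <;> by_cases hB : k = n ∧ l = m
  · have hkl : k = l := hB.1.trans hA.2.symm
    simp only [if_pos hA, if_pos hB, if_pos (Or.inl hA), if_pos hkl]
    field_simp
    ring
  · have hkl : ¬ k = l := by rintro rfl; exact hB ⟨hA.2, hA.1⟩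
    simp only [if_pos hA, if_neg hB, if_pos (Or.inl hA), if_neg hkl]
    field_simp
    ring
  · simp only [if_neg hA, if_pos hB, if_pos (Or.inr hB)]
    field_simp
    ring
  · simp only [if_neg hA, if_neg hB,
      if_neg (show ¬((k = m ∧ l = n) ∨ (k = n ∧ l = m)) by tauto)]
    simp

lemma inSepCone_S (d : ℕ) (hd : 1 < d) :
    InSepCone (((d : ℂ))⁻¹ • alphaW d + (1 + ((d : ℂ))⁻¹) • sigW d) := by
  refine ⟨((d:ℝ)+2)/(d:ℝ), ∑ x : idxT d, ((wt d x : ℝ) : ℂ) • (mA d x ⊗ₖ mB d x),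
    by positivity, ?_, sep_main d hd⟩
  have hstA : ∀ x : idxT d, IsState (mA d x) := by
    rintro (⟨a, b⟩ | χ)
    · exact eProj_state d a
    · exact chiProj_state d (by omega) χ
  have hstB : ∀ x : idxT d, IsState (mB d x) := by
    rintro (⟨a, b⟩ | χ)
    · exact eProj_state d b
    · exact chiProj_state d (by omega) χ
  classical
  let e := (Fintype.equivFin (idxT d)).symm
  refine ⟨Fintype.card (idxT d), fun i => wt d (e i), fun i => mA d (e i), fun i => mB d (e i),
    fun i => wt_nonneg d hd _, ?_, fun i => hstA _, fun i => hstB _, ?_⟩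
  · rw [Equiv.sum_comp e (wt d)]
    exact wt_sum d hd
  · exact (Equiv.sum_comp e (fun x => ((wt d x : ℝ) : ℂ) • (mA d x ⊗ₖ mB d x))).symm

lemma psd_trace_re_nonneg {n : Type*} [Fintype n] [DecidableEq n] {M : Matrix n n ℂ}
    (h : M.PosSemidef) : 0 ≤ M.trace.re := by
  have hdiag : ∀ p, 0 ≤ (M p p).re := by
    intro p
    have h2 := h.dotProduct_mulVec_nonneg (Pi.single p 1)
    rw [Matrix.mulVec_single] at h2
    have : star (Pi.single p (1:ℂ)) ⬝ᵥ (fun i => M i p * 1) = M p p := by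
      simp [dotProduct, Pi.single_apply, apply_ite (starRingEnd ℂ)]
    rw [show MulOpposite.op (1:ℂ) • M.col p = fun i => M i p * 1 by ext i; simp, this] at h2
    exact (Complex.le_def.mp h2).1
  rw [Matrix.trace, Complex.re_sum]
  exact Finset.sum_nonneg fun p _ => hdiag p

lemma trace_pt {a b : Type*} [Fintype a] [Fintype b] (A : Matrix (a × b) (a × b) ℂ) :
    (pt A).trace = A.trace := by
  simp [Matrix.trace, Matrix.diag, pt]

theorem stmt18 (d : ℕ) (hd : 1 < d) :
    InSepCone (((d : ℂ))⁻¹ • alphaW d + (1 + ((d : ℂ))⁻¹) • sigW d) ∧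
    pt (((d : ℂ))⁻¹ • alphaW d + (1 + ((d : ℂ))⁻¹) • sigW d) + pt (alphaW d) =
      (2 / ((d : ℂ) * ((d : ℂ) - 1))) • ((1 : BOp d) - PhiME d) ∧
    (pt (((d : ℂ))⁻¹ • alphaW d + (1 + ((d : ℂ))⁻¹) • sigW d) + pt (alphaW d)).PosSemidef ∧
    pt (((d : ℂ))⁻¹ • alphaW d + (1 + ((d : ℂ))⁻¹) • sigW d) - pt (alphaW d) =
      (2 / (d : ℂ)) • PhiME d ∧
    (pt (((d : ℂ))⁻¹ • alphaW d + (1 + ((d : ℂ))⁻¹) • sigW d) - pt (alphaW d)).PosSemidef ∧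
    (((d : ℂ))⁻¹ • alphaW d + (1 + ((d : ℂ))⁻¹) • sigW d).trace = 1 + 2 / (d : ℂ) ∧
    EkappaG d (alphaW d) ≤ Real.logb 2 (1 + 2 / (d : ℝ)) := by
  have hd0 : 0 < d := by omega
  have hdR : (2:ℝ) ≤ (d:ℝ) := by exact_mod_cast hd
  have hpsd3 : (pt (((d : ℂ))⁻¹ • alphaW d + (1 + ((d : ℂ))⁻¹) • sigW d) + pt (alphaW d)).PosSemidef := by
    rw [pt_sum_id d hd]
    apply psd_smul (one_sub_phi_psd d hd0)
    have hc : (2 / ((d:ℂ) * ((d:ℂ) - 1))) = (((2 / ((d:ℝ) * ((d:ℝ) - 1)) : ℝ)) : ℂ) := by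
      push_cast; ring
    rw [hc, Complex.zero_le_real]
    apply div_nonneg (by norm_num)
    nlinarith
  have hpsd5 : (pt (((d : ℂ))⁻¹ • alphaW d + (1 + ((d : ℂ))⁻¹) • sigW d) - pt (alphaW d)).PosSemidef := by
    rw [pt_diff_id d hd]
    apply psd_smul (phi_psd d hd0)
    have hc : (2 / ((d:ℂ))) = (((2 / (d:ℝ) : ℝ)) : ℂ) := by push_cast; ring
    rw [hc, Complex.zero_le_real]
    positivity
  refine ⟨inSepCone_S d hd, pt_sum_id d hd, hpsd3, pt_diff_id d hd, hpsd5, trace_S d hd, ?_⟩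
  -- the Ekappa bound
  set T : Set ℝ := {t : ℝ | ∃ S : BOp d,
    InSepCone S ∧ loe (-(pt S)) (pt (alphaW d)) ∧ loe (pt (alphaW d)) (pt S) ∧ t = S.trace.re}
    with hT
  have htrace_re : (((d : ℂ))⁻¹ • alphaW d + (1 + ((d : ℂ))⁻¹) • sigW d).trace.re
      = 1 + 2 / (d:ℝ) := by
    rw [trace_S d hd]
    have : (1 + 2 / (d:ℂ)) = (((1 + 2 / (d:ℝ) : ℝ)) : ℂ) := by push_cast; ring
    rw [this, Complex.ofReal_re]
  have hmem : (1 + 2 / (d:ℝ)) ∈ T := by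
    refine ⟨((d : ℂ))⁻¹ • alphaW d + (1 + ((d : ℂ))⁻¹) • sigW d, inSepCone_S d hd, ?_, ?_,
      htrace_re.symm⟩
    · show (pt (alphaW d) - -(pt (((d : ℂ))⁻¹ • alphaW d + (1 + ((d : ℂ))⁻¹) • sigW d))).PosSemidef
      rw [sub_neg_eq_add, add_comm]
      exact hpsd3
    · exact hpsd5
  have hlb : ∀ t ∈ T, (0:ℝ) ≤ t := by
    rintro t ⟨S', hcone, hl1, hl2, rfl⟩
    have hadd : ((pt S' - pt (alphaW d)) + (pt (alphaW d) - -(pt S'))).PosSemidef :=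
      hl2.add hl1
    have heq : (pt S' - pt (alphaW d)) + (pt (alphaW d) - -(pt S')) = pt S' + pt S' := by
      abel
    rw [heq] at hadd
    have h1 : 0 ≤ (pt S' + pt S').trace.re := psd_trace_re_nonneg hadd
    rw [Matrix.trace_add, trace_pt, Complex.add_re] at h1
    linarith
  have hbdd : BddBelow T := ⟨0, fun t ht => hlb t ht⟩
  have hinf_le : sInf T ≤ 1 + 2 / (d:ℝ) := csInf_le hbdd hmem
  have hinf_nonneg : 0 ≤ sInf T := Real.sInf_nonneg hlb
  have hE : EkappaG d (alphaW d) = Real.logb 2 (sInf T) := rfl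
  rw [hE]
  rcases eq_or_lt_of_le hinf_nonneg with h | h
  · rw [← h, Real.logb_zero]
    refine Real.logb_nonneg (by norm_num) ?_
    have h2 : (0:ℝ) ≤ 2 / (d:ℝ) := by positivity
    linarith
  · exact Real.logb_le_logb_of_le (by norm_num) h hinf_le

end
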